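/- Let M, N be interval modules over ℝⁿ and δ ≥ 0. Then d_I(M,N) ≤ δ if and only if: (i) δ ≥ δ* := sup_x d_I(M|_{Δ_x}, N|_{Δ_x}), and (ii) for all δ' > δ, every intersection component of M and N_{→δ'} is either (M, N_{→δ'})-valid or δ'_{(M,N_{→δ'})}-trivializable, and symmetrically every intersection component of M_{→δ'} and N is either (N, M_{→δ'})-valid or δ'_{(N,M_{→δ'})}-trivializable. -/

import Mathlib

open scoped ENNReal NNReal
open Filter
noncomputable section
attribute [local instance] Classical.propDecidable
set_option linter.unusedVariables false

/-- Points of the poset ℝⁿ. The product instance gives the pointwise partial order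
and the sup-norm metric. -/
abbrev Pt (n : ℕ) := Fin n → ℝ

/-- The diagonal vector δ⃗ = (δ,...,δ). -/
def diag (n : ℕ) (δ : ℝ) : Pt n := fun _ => δ

lemma le_add_diag {n : ℕ} (x : Pt n) {δ : ℝ} (hδ : 0 ≤ δ) : x ≤ x + diag n δ :=
  fun _ => le_add_of_nonneg_right hδ

/-- A (p.f.d.-agnostic) persistence module over the poset ℝⁿ with values in
k-vector spaces: a functor from ℝⁿ to Vec. -/
structure PersMod (n : ℕ) (k : Type*) [Field k] where
  V : Pt n → Type*
  [addgrp : ∀ x, AddCommGroup (V x)]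
  [mod : ∀ x, Module k (V x)]
  ρ : ∀ {x y : Pt n}, x ≤ y → (V x →ₗ[k] V y)
  ρ_id : ∀ x : Pt n, ρ (le_refl x) = LinearMap.id
  ρ_comp : ∀ {x y z : Pt n} (h1 : x ≤ y) (h2 : y ≤ z), ρ (h1.trans h2) = (ρ h2).comp (ρ h1)

attribute [instance] PersMod.addgrp PersMod.mod

variable {n : ℕ} {k : Type*} [Field k]

/-- A morphism (natural transformation) of persistence modules. -/
structure PersHom (M N : PersMod n k) where
  app : ∀ x, M.V x →ₗ[k] N.V x
  natural : ∀ {x y : Pt n} (h : x ≤ y), (app y).comp (M.ρ h) = (N.ρ h).comp (app x)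

/-- A δ-interleaving between M and N: families φ_x : M_x → N_{x+δ⃗},
ψ_x : N_x → M_{x+δ⃗} satisfying square and triangular commutativity. -/
def PersMod.Interleaved (M N : PersMod n k) (δ : ℝ≥0) : Prop :=
  ∃ (φ : ∀ x : Pt n, M.V x →ₗ[k] N.V (x + diag n (δ : ℝ)))
    (ψ : ∀ x : Pt n, N.V x →ₗ[k] M.V (x + diag n (δ : ℝ))),
    (∀ {x y : Pt n} (h : x ≤ y),
        (φ y).comp (M.ρ h) = (N.ρ (add_le_add_left h _)).comp (φ x)) ∧
    (∀ {x y : Pt n} (h : x ≤ y),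
        (ψ y).comp (N.ρ h) = (M.ρ (add_le_add_left h _)).comp (ψ x)) ∧
    (∀ x : Pt n, M.ρ ((le_add_diag x δ.coe_nonneg).trans (le_add_diag _ δ.coe_nonneg))
        = (ψ (x + diag n (δ : ℝ))).comp (φ x)) ∧
    (∀ x : Pt n, N.ρ ((le_add_diag x δ.coe_nonneg).trans (le_add_diag _ δ.coe_nonneg))
        = (φ (x + diag n (δ : ℝ))).comp (ψ x))

/-- The interleaving distance (∞ if no interleaving exists). -/
def PersMod.dI (M N : PersMod n k) : ℝ≥0∞ :=
  ⨅ (δ : ℝ≥0) (_ : M.Interleaved N δ), (δ : ℝ≥0∞)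

/-- The diagonal shift M_{→d}. -/
def PersMod.dshift (M : PersMod n k) (d : ℝ) : PersMod n k where
  V x := M.V (x + diag n d)
  ρ h := M.ρ (add_le_add_left h _)
  ρ_id x := M.ρ_id _
  ρ_comp h1 h2 := M.ρ_comp _ _

/-- M is c-trivial: every structure map over a diagonal shift by c is zero. -/
def PersMod.DTrivial (M : PersMod n k) (c : ℝ≥0) : Prop :=
  ∀ x : Pt n, M.ρ (le_add_diag x c.coe_nonneg) = 0

/-- The 1-parameter slice of M along the diagonal line through x. -/
def PersMod.slice (M : PersMod n k) (x : Pt n) : PersMod 1 k where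
  V t := M.V (x + diag n (t 0))
  ρ {t t'} h := M.ρ (fun i => add_le_add_right (h 0) (x i))
  ρ_id t := M.ρ_id _
  ρ_comp h1 h2 := M.ρ_comp _ _

/-- δ* = sup over diagonal lines of the slice interleaving distances. -/
def deltaStar (M N : PersMod n k) : ℝ≥0∞ :=
  ⨆ x : Pt n, (M.slice x).dI (N.slice x)

/-- Finite direct sum of persistence modules. -/
def dirSum {ι : Type} [Fintype ι] (Ms : ι → PersMod n k) : PersMod n k where
  V x := ∀ i, (Ms i).V x
  ρ h := LinearMap.pi (fun i => ((Ms i).ρ h).comp (LinearMap.proj i))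
  ρ_id x := by
    apply LinearMap.ext; intro v; funext i
    simp [(Ms i).ρ_id]
  ρ_comp h1 h2 := by
    apply LinearMap.ext; intro v; funext i
    show ((Ms i).ρ (h1.trans h2)) (v i) = _
    rw [(Ms i).ρ_comp h1 h2]; rfl

/-- Zigzag reachability inside a set: p ≤ p₁ ≥ p₂ ≤ ... with all points in A. -/
def Zigzag (A : Set (Pt n)) : Pt n → Pt n → Prop :=
  Relation.ReflTransGen (fun a b => a ∈ A ∧ b ∈ A ∧ (a ≤ b ∨ b ≤ a))

/-- An interval: nonempty, order-convex, zigzag-connected. -/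
def IsPInterval (I : Set (Pt n)) : Prop :=
  I.Nonempty ∧ (∀ p ∈ I, ∀ q ∈ I, ∀ r, p ≤ r → r ≤ q → r ∈ I) ∧
    ∀ p ∈ I, ∀ q ∈ I, Zigzag I p q

/-- Q is a (zigzag-)connected component of A. -/
def IsComponent (A Q : Set (Pt n)) : Prop :=
  ∃ p ∈ A, Q = {q | Zigzag A p q}

/-- The fibre of the interval module with interval I: k on I, 0 elsewhere,
realised as a submodule of k. -/
def subOf (k : Type*) [Field k] (I : Set (Pt n)) (x : Pt n) : Submodule k k :=
  if x ∈ I then ⊤ else ⊥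

/-- The canonical map between fibres: identity within I, zero otherwise. -/
def stepFun (I : Set (Pt n)) (x y : Pt n) :
    ↥(subOf k I x) →ₗ[k] ↥(subOf k I y) where
  toFun v := ⟨if y ∈ I then (v : k) else 0, by
    by_cases hy : y ∈ I <;> simp only [subOf, hy, if_true, if_false, Submodule.mem_top, Submodule.zero_mem]⟩
  map_add' a b := by
    by_cases hy : y ∈ I <;> · apply Subtype.ext; simp [hy]
  map_smul' c a := by
    by_cases hy : y ∈ I <;> · apply Subtype.ext; simp [hy]

/-- The interval module with interval I. -/
def IntervalMod (k : Type*) [Field k] (I : Set (Pt n)) (hI : IsPInterval I) :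
    PersMod n k where
  V x := ↥(subOf k I x)
  ρ {x y} _ := stepFun I x y
  ρ_id x := by
    apply LinearMap.ext; intro v
    apply Subtype.ext
    by_cases hx : x ∈ I
    · simp [stepFun, hx]
    · have hv : (v : k) = 0 := by have h2 := v.2; simp only [subOf, hx, if_false] at h2; exact (Submodule.mem_bot k).1 h2
      simp [stepFun, hx, hv]
  ρ_comp {x y z} h1 h2 := by
    apply LinearMap.ext; intro v
    apply Subtype.ext
    by_cases hz : z ∈ I
    · by_cases hy : y ∈ I
      · simp [stepFun, hy, hz]
      · have hx : x ∉ I := fun hx => hy (hI.2.1 x hx z hz y h1 h2)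
        have hv : (v : k) = 0 := by have h2 := v.2; simp only [subOf, hx, if_false] at h2; exact (Submodule.mem_bot k).1 h2
        simp [stepFun, hy, hz, hv]
    · simp [stepFun, hz]

/-- Lower boundary L(I). -/
def lowerBd (I : Set (Pt n)) : Set (Pt n) :=
  {x | x ∈ closure I ∧ ∀ y : Pt n, (∀ i, y i < x i) → y ∉ I}

/-- Upper boundary U(I). -/
def upperBd (I : Set (Pt n)) : Set (Pt n) :=
  {x | x ∈ closure I ∧ ∀ y : Pt n, (∀ i, x i < y i) → y ∉ I}

/-- Diagonal distance dl(x, A): the infimum of sup-norm distances from x to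
points of A along the diagonal line Δ_x, ∞ when Δ_x ∩ A = ∅. -/
def dl (x : Pt n) (A : Set (Pt n)) : ℝ≥0∞ :=
  ⨅ (α : ℝ) (_ : x + diag n α ∈ A), ENNReal.ofReal |α|

/-- d_triv^{(M,N)}(x) = max(dl(x,U(I_M))/2, dl(x,L(I_N))/2). -/
def dtriv (IM IN : Set (Pt n)) (x : Pt n) : ℝ≥0∞ :=
  max (dl x (upperBd IM) / 2) (dl x (lowerBd IN) / 2)

/-- An intersection component with interval Q is δ_{(M,N)}-trivializable. -/
def Trivializable (IM IN Q : Set (Pt n)) (δ : ℝ≥0∞) : Prop :=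
  ∀ x ∈ Q, dtriv IM IN x < δ

/-- (M,N)-validity of an intersection component with interval Q. -/
def MNValid (IM IN Q : Set (Pt n)) : Prop :=
  ∀ x ∈ Q, (∀ y : Pt n, y ≤ x → y ∈ IM → y ∈ IN) ∧
    (∀ z : Pt n, x ≤ z → z ∈ IN → z ∈ IM)

/-- The interval of the shifted module N_{→d}. -/
def shiftSet (I : Set (Pt n)) (d : ℝ) : Set (Pt n) := {x | x + diag n d ∈ I}

/-- A vertex of (the boundary of) a set: a boundary point through which no
nontrivial line segment of the boundary passes. -/
def IsVertex (I : Set (Pt n)) (x : Pt n) : Prop :=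
  x ∈ frontier I ∧
    ¬ ∃ v : Pt n, v ≠ 0 ∧ ∃ ε > (0:ℝ), ∀ t : ℝ, |t| < ε → x + t • v ∈ frontier I

/-- An axis-aligned (possibly degenerate) rectangle. -/
def IsRect (R : Set (Pt n)) : Prop := ∃ a b : Pt n, a ≤ b ∧ R = Set.Icc a b

/-- A discretely presented interval: a finite union of rectangles. -/
def DiscPresented (I : Set (Pt n)) : Prop :=
  ∃ F : Finset (Set (Pt n)), (∀ R ∈ F, IsRect R) ∧ I = ⋃ R ∈ F, (R : Set (Pt n))

/-- f is a facet of I orthogonal to direction i: contained in a hyperplane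
{y_i = c}, contained in the lower or upper boundary, and (n−1)-dimensional
(contains a full hyperplane patch around one of its points). -/
def IsFacetDir (I : Set (Pt n)) (f : Set (Pt n)) (i : Fin n) : Prop :=
  ∃ c : ℝ, f ⊆ {y | y i = c} ∧ (f ⊆ lowerBd I ∨ f ⊆ upperBd I) ∧
    ∃ z ∈ f, ∃ ε > (0:ℝ), ∀ y : Pt n, y i = c → dist y z < ε → y ∈ f

/-- The set D(x) of the four diagonal boundary distances. -/
def candD (IM IN : Set (Pt n)) (x : Pt n) : Set ℝ≥0∞ :=
  {dl x (lowerBd IM), dl x (lowerBd IN), dl x (upperBd IM), dl x (upperBd IN)}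

/-- The candidate set S. -/
def candS (IM IN : Set (Pt n)) : Set ℝ≥0∞ :=
  {d | ∃ x : Pt n, (IsVertex IM x ∨ IsVertex IN x) ∧
    (d ∈ candD IM IN x ∨ 2 * d ∈ candD IM IN x)}

/-- One-sided limit lim_{ε→0+} f(x − ε v) (junk value if the limit fails to exist). -/
def dlim (f : Pt n → ℤ) (x v : Pt n) : ℤ :=
  limUnder (nhdsWithin (0:ℝ) (Set.Ioi 0)) (fun ε : ℝ => f (x - ε • v))

/-- The indicator vector Σ_{i ∈ s} e_i. -/
def basisVec (n : ℕ) (s : Finset (Fin n)) : Pt n := fun i => if i ∈ s then 1 else 0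

/-- The differential Δf(x) = Σ_k (−1)^k Σ_{|s|=k} lim_{ε→0+} f(x − ε Σ_{i∈s} e_i). -/
def diffl (f : Pt n → ℤ) (x : Pt n) : ℤ :=
  ∑ s : Finset (Fin n), (-1 : ℤ) ^ s.card * dlim f x (basisVec n s)

/-- Right continuity of f : ℝⁿ → ℤ. -/
def RightCont (f : Pt n → ℤ) : Prop :=
  ∀ x : Pt n, Filter.Tendsto f (nhdsWithin x (Set.Ici x)) (nhds (f x))

/-- A nice function: right continuous, finitely supported differential,
support bounded below. -/
def NiceFn (f : Pt n → ℤ) : Prop :=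
  RightCont f ∧ {x | diffl f x ≠ 0}.Finite ∧ ∃ a : ℝ, ∀ x, f x ≠ 0 → ∀ i, a ≤ x i

/-- Positive part Δf₊. -/
def difflp (f : Pt n → ℤ) (x : Pt n) : ℤ := max (diffl f x) 0
/-- Negative part Δf₋. -/
def difflm (f : Pt n → ℤ) (x : Pt n) : ℤ := min (diffl f x) 0

/-- Σ_{y ≤ x} g(y), as a finite sum over the support. -/
def sumLe (g : Pt n → ℤ) (x : Pt n) : ℤ := ∑ᶠ y ∈ {y : Pt n | y ≤ x}, g y

/-- The δ-extension f^{+δ}(x) = f_{Σ+}(x+δ⃗) + f_{Σ−}(x−δ⃗). -/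
def extend (f : Pt n → ℤ) (δ : ℝ) (x : Pt n) : ℤ :=
  sumLe (difflp f) (x + diag n δ) + sumLe (difflm f) (x - diag n δ)

/-- The δ-shrinking f^{−δ}(x) = f_{Σ−}(x+δ⃗) + f_{Σ+}(x−δ⃗). -/
def shrink (f : Pt n → ℤ) (δ : ℝ) (x : Pt n) : ℤ :=
  sumLe (difflm f) (x + diag n δ) + sumLe (difflp f) (x - diag n δ)

/-- d₊(f,g) = inf{δ : f ≤ g^{+δ}, g ≤ f^{+δ}}. -/
def dplus (f g : Pt n → ℤ) : ℝ≥0∞ :=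
  ⨅ (δ : ℝ≥0) (_ : (∀ x, f x ≤ extend g δ x) ∧ (∀ x, g x ≤ extend f δ x)), (δ : ℝ≥0∞)

/-- d₋(f,g) = inf{δ : f ≥ g^{−δ}, g ≥ f^{−δ}}. -/
def dminus (f g : Pt n → ℤ) : ℝ≥0∞ :=
  ⨅ (δ : ℝ≥0) (_ : (∀ x, shrink g δ x ≤ f x) ∧ (∀ x, shrink f δ x ≤ g x)), (δ : ℝ≥0∞)

/-- The dimension distance d₀ = min(d₋, d₊). -/
def d0 (f g : Pt n → ℤ) : ℝ≥0∞ := min (dminus f g) (dplus f g)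

/-- The dimension function dm M(x) = dim M_x (as an integer). -/
def dmFun (M : PersMod n k) : Pt n → ℤ := fun x => (Module.finrank k (M.V x) : ℤ)

/-- A nice persistence module: all structure maps over sufficiently small
diagonal shifts are injective or surjective. -/
def PersMod.Nice (M : PersMod n k) : Prop :=
  ∃ ε₀ > (0:ℝ), ∀ ε : ℝ, ∀ h0 : 0 < ε, ε < ε₀ → ∀ x : Pt n,
    Function.Injective (M.ρ (le_add_diag x h0.le)) ∨
      Function.Surjective (M.ρ (le_add_diag x h0.le))

/-- Composition ρ_i ∘ ... ∘ ρ₁ of a chain of linear maps. -/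
def chainComp {K : Type*} [Field K] (V : ℕ → Type*) [∀ i, AddCommGroup (V i)]
    [∀ i, Module K (V i)] (ρ : ∀ i, V i →ₗ[K] V (i+1)) : ∀ i, V 0 →ₗ[K] V i
  | 0 => LinearMap.id
  | (i+1) => (ρ i).comp (chainComp V ρ i)


/-! ### Auxiliary infrastructure -/

section Infra

variable {n : ℕ} {k : Type*} [Field k]

lemma diag_add (x : Pt n) (a b : ℝ) : x + diag n a + diag n b = x + diag n (a + b) := by
  funext i; simp [diag]; ring

lemma diag_zero (x : Pt n) : x + diag n 0 = x := by
  funext i; simp [diag]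

lemma diag_le_diag (x : Pt n) {a b : ℝ} (h : a ≤ b) : x + diag n a ≤ x + diag n b :=
  fun i => by simpa [diag] using h

lemma le_diag_of_le {x y : Pt n} (h : x ≤ y) (a : ℝ) : x + diag n a ≤ y + diag n a :=
  fun i => by simpa [diag] using add_le_add_right (h i) a

lemma diag_point_congr (x : Pt n) {a b : ℝ} (h : a = b) : x + diag n a = x + diag n b := by rw [h]

/-- The canonical generator of the fibre of an interval module at a point of the interval. -/
def onev {I : Set (Pt n)} {x : Pt n} (k : Type*) [Field k] (h : x ∈ I) : ↥(subOf k I x) :=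
  ⟨1, by simp [subOf, h]⟩

@[simp] lemma onev_val {I : Set (Pt n)} {x : Pt n} (h : x ∈ I) : ((onev k h : ↥(subOf k I x)) : k) = 1 := rfl

lemma onev_ne_zero {I : Set (Pt n)} {x : Pt n} (h : x ∈ I) : (onev k h : ↥(subOf k I x)) ≠ 0 :=
  fun hc => one_ne_zero (α := k) (congrArg Subtype.val hc)

lemma val_zero_of_not_mem {I : Set (Pt n)} {x : Pt n} (h : x ∉ I) (v : ↥(subOf k I x)) :
    (v : k) = 0 := by
  have := v.2; simp only [subOf, h, if_false] at this; exact (Submodule.mem_bot k).1 this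

lemma eq_zero_of_not_mem {I : Set (Pt n)} {x : Pt n} (h : x ∉ I) (v : ↥(subOf k I x)) :
    v = 0 := Subtype.ext (val_zero_of_not_mem h v)

lemma mem_of_ne_zero {I : Set (Pt n)} {x : Pt n} {v : ↥(subOf k I x)} (h : v ≠ 0) : x ∈ I := by
  by_contra hx; exact h (eq_zero_of_not_mem hx v)

lemma eq_smul_onev {I : Set (Pt n)} {x : Pt n} (h : x ∈ I) (v : ↥(subOf k I x)) :
    v = (v : k) • onev k h := by
  apply Subtype.ext; simp [onev, smul_eq_mul]

@[simp] lemma stepFun_val {I : Set (Pt n)} (x y : Pt n) (v : ↥(subOf k I x)) :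
    ((stepFun I x y v : ↥(subOf k I y)) : k) = if y ∈ I then (v : k) else 0 := rfl

lemma stepFun_onev {I : Set (Pt n)} {x y : Pt n} (hx : x ∈ I) (hy : y ∈ I) :
    stepFun I x y (onev k hx) = onev k hy := by
  apply Subtype.ext; simp [hy]

lemma stepFun_zero_of_not_mem {I : Set (Pt n)} {x y : Pt n} (hy : y ∉ I)
    (v : ↥(subOf k I x)) : stepFun I x y v = 0 := by
  apply Subtype.ext; simp [hy]

lemma intervalMod_ρ (I : Set (Pt n)) (hI : IsPInterval I) {x y : Pt n} (h : x ≤ y) :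
    (IntervalMod k I hI).ρ h = stepFun I x y := rfl

/-- Zigzag is symmetric. -/
lemma zigzag_symm {A : Set (Pt n)} {a b : Pt n} (h : Zigzag A a b) : Zigzag A b a :=
  by
    induction h with
    | refl => exact Relation.ReflTransGen.refl
    | tail _ hstep ih => exact Relation.ReflTransGen.head ⟨hstep.2.1, hstep.1, hstep.2.2.symm⟩ ih

lemma zigzag_mem_right {A : Set (Pt n)} {a b : Pt n} (h : Zigzag A a b) (ha : a ∈ A) :
    b ∈ A := by
  induction h with
  | refl => exact ha
  | tail _ hstep _ => exact hstep.2.1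

lemma zigzag_comp_eq {A : Set (Pt n)} {a b : Pt n} (h : Zigzag A a b) :
    {q | Zigzag A a q} = {q | Zigzag A b q} := by
  ext q
  exact ⟨fun hq => Relation.ReflTransGen.trans (zigzag_symm h) hq,
         fun hq => Relation.ReflTransGen.trans h hq⟩

lemma zigzag_single {A : Set (Pt n)} {a b : Pt n} (ha : a ∈ A) (hb : b ∈ A)
    (hab : a ≤ b ∨ b ≤ a) : Zigzag A a b :=
  Relation.ReflTransGen.single ⟨ha, hb, hab⟩

lemma shift_conv {I : Set (Pt n)} (hconv : ∀ p ∈ I, ∀ q ∈ I, ∀ r, p ≤ r → r ≤ q → r ∈ I)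
    (d : ℝ) : ∀ p ∈ shiftSet I d, ∀ q ∈ shiftSet I d, ∀ r, p ≤ r → r ≤ q → r ∈ shiftSet I d :=
  fun p hp q hq r hpr hrq =>
    hconv _ hp _ hq _ (le_diag_of_le hpr d) (le_diag_of_le hrq d)

lemma dl_le_of_mem {x : Pt n} {A : Set (Pt n)} {α : ℝ} (h : x + diag n α ∈ A) :
    dl x A ≤ ENNReal.ofReal |α| :=
  iInf_le_of_le α (iInf_le _ h)

lemma dl_lt_elim {x : Pt n} {A : Set (Pt n)} {c : ℝ≥0∞} (h : dl x A < c) :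
    ∃ α : ℝ, x + diag n α ∈ A ∧ ENNReal.ofReal |α| < c := by
  simp only [dl, iInf_lt_iff] at h
  obtain ⟨α, hm, hlt⟩ := h
  exact ⟨α, hm, hlt⟩

lemma dI_lt_elim {M N : PersMod n k} {c : ℝ≥0∞} (h : M.dI N < c) :
    ∃ e : ℝ≥0, M.Interleaved N e ∧ (e : ℝ≥0∞) < c := by
  simp only [PersMod.dI, iInf_lt_iff] at h
  obtain ⟨e, hI, hlt⟩ := h
  exact ⟨e, hI, hlt⟩

lemma interleaved_symm {M N : PersMod n k} {d : ℝ≥0} (h : M.Interleaved N d) :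
    N.Interleaved M d := by
  obtain ⟨φ, ψ, h1, h2, h3, h4⟩ := h
  exact ⟨ψ, φ, h2, h1, h4, h3⟩

end Infra

section Boundary

variable {n : ℕ}

lemma exists_upper_bd {I : Set (Pt n)}
    (hconv : ∀ p ∈ I, ∀ q ∈ I, ∀ r, p ≤ r → r ≤ q → r ∈ I)
    {x : Pt n} {c : ℝ} (hx : x ∈ I) (hc0 : 0 ≤ c) (hc : x + diag n c ∉ I) :
    ∃ α, 0 ≤ α ∧ α ≤ c ∧ x + diag n α ∈ upperBd I := by
  rcases Nat.eq_zero_or_pos n with hn | hn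
  · exfalso
    apply hc
    rw [show x + diag n c = x from funext fun i => by subst hn; exact i.elim0]
    exact hx
  haveI : Nonempty (Fin n) := ⟨⟨0, hn⟩⟩
  set S := {α : ℝ | 0 ≤ α ∧ α ≤ c ∧ x + diag n α ∈ I} with hS
  have h0S : (0:ℝ) ∈ S := ⟨le_rfl, hc0, by rw [diag_zero]; exact hx⟩
  have hbdd : BddAbove S := ⟨c, fun α hα => hα.2.1⟩
  set β := sSup S with hβ
  have hβ0 : 0 ≤ β := le_csSup hbdd h0S
  have hβc : β ≤ c := csSup_le ⟨0, h0S⟩ fun α hα => hα.2.1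
  refine ⟨β, hβ0, hβc, ?_, ?_⟩
  · -- closure part
    have hcl : β ∈ closure S := csSup_mem_closure ⟨0, h0S⟩ hbdd
    have hcont : Continuous (fun α : ℝ => x + diag n α) := by
      apply continuous_pi; intro i
      exact (continuous_const.add continuous_id : Continuous fun α : ℝ => x i + α)
    exact map_mem_closure (f := fun α : ℝ => x + diag n α) hcont hcl (fun α hα => hα.2.2)
  · intro y hy hyI
    set m := Finset.univ.inf' Finset.univ_nonempty (fun i => y i - (x + diag n β) i) with hm
    have hmpos : 0 < m := by
      rw [hm, Finset.lt_inf'_iff]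
      intro i _
      exact sub_pos.mpr (hy i)
    have hle : ∀ i, m ≤ y i - (x i + β) := by
      intro i
      have h1 := Finset.inf'_le (fun j => y j - (x + diag n β) j) (Finset.mem_univ i)
      exact h1
    have hβy : x + diag n (β + m) ≤ y := by
      intro i
      have := hle i
      simp only [Pi.add_apply, diag]
      linarith
    have hmem : x + diag n (β + m) ∈ I :=
      hconv x hx y hyI _ (le_add_diag x (by linarith)) hβy
    by_cases hbc : β + m ≤ c
    · have hmS : β + m ∈ S := ⟨by linarith, hbc, hmem⟩
      have := le_csSup hbdd hmS
      linarith
    · push_neg at hbc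
      exact hc (hconv x hx _ hmem _ (le_add_diag x hc0) (diag_le_diag x hbc.le))

lemma exists_lower_bd {I : Set (Pt n)}
    (hconv : ∀ p ∈ I, ∀ q ∈ I, ∀ r, p ≤ r → r ≤ q → r ∈ I)
    {x : Pt n} {c : ℝ} (hx : x ∈ I) (hc0 : 0 ≤ c) (hc : x + diag n (-c) ∉ I) :
    ∃ α, 0 ≤ α ∧ α ≤ c ∧ x + diag n (-α) ∈ lowerBd I := by
  rcases Nat.eq_zero_or_pos n with hn | hn
  · exfalso
    apply hc
    rw [show x + diag n (-c) = x from funext fun i => by subst hn; exact i.elim0]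
    exact hx
  haveI : Nonempty (Fin n) := ⟨⟨0, hn⟩⟩
  set S := {α : ℝ | 0 ≤ α ∧ α ≤ c ∧ x + diag n (-α) ∈ I} with hS
  have h0S : (0:ℝ) ∈ S := ⟨le_rfl, hc0, by rw [neg_zero, diag_zero]; exact hx⟩
  have hbdd : BddAbove S := ⟨c, fun α hα => hα.2.1⟩
  set β := sSup S with hβ
  have hβ0 : 0 ≤ β := le_csSup hbdd h0S
  have hβc : β ≤ c := csSup_le ⟨0, h0S⟩ fun α hα => hα.2.1
  refine ⟨β, hβ0, hβc, ?_, ?_⟩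
  · have hcl : β ∈ closure S := csSup_mem_closure ⟨0, h0S⟩ hbdd
    have hcont : Continuous (fun α : ℝ => x + diag n (-α)) := by
      apply continuous_pi; intro i
      exact
        (continuous_const.add continuous_neg : Continuous fun α : ℝ => x i + -α)
    exact map_mem_closure (f := fun α : ℝ => x + diag n (-α)) hcont hcl (fun α hα => hα.2.2)
  · intro y hy hyI
    set m := Finset.univ.inf' Finset.univ_nonempty (fun i => (x + diag n (-β)) i - y i) with hm
    have hmpos : 0 < m := by
      rw [hm, Finset.lt_inf'_iff]
      intro i _
      exact sub_pos.mpr (hy i)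
    have hle : ∀ i, m ≤ (x i + -β) - y i := by
      intro i
      have h1 := Finset.inf'_le (fun j => (x + diag n (-β)) j - y j) (Finset.mem_univ i)
      exact h1
    have hβy : y ≤ x + diag n (-(β + m)) := by
      intro i
      have := hle i
      simp only [Pi.add_apply, diag]
      linarith
    have hmem : x + diag n (-(β + m)) ∈ I := by
      refine hconv y hyI x hx _ hβy ?_
      intro i
      simp only [Pi.add_apply, diag]
      linarith
    by_cases hbc : β + m ≤ c
    · have hmS : β + m ∈ S := ⟨by linarith, hbc, hmem⟩
      have := le_csSup hbdd hmS
      linarith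
    · push_neg at hbc
      refine hc (hconv _ hmem x hx _ ?_ ?_)
      · intro i; simp only [Pi.add_apply, diag]; linarith
      · intro i; simp only [Pi.add_apply, diag]; linarith

end Boundary

section Slice

variable {n : ℕ} {k : Type*} [Field k]

lemma rho_rho (M : PersMod n k) {a b c : Pt n} (h1 : a ≤ b) (h2 : b ≤ c) (v : M.V a) :
    M.ρ h2 (M.ρ h1 v) = M.ρ (h1.trans h2) v := by
  rw [M.ρ_comp h1 h2]; rfl

lemma nat_apply {M N : PersMod n k} {d : ℝ≥0}
    {φ : ∀ x : Pt n, M.V x →ₗ[k] N.V (x + diag n (d:ℝ))}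
    (sqφ : ∀ {x y : Pt n} (h : x ≤ y),
      (φ y).comp (M.ρ h) = (N.ρ (add_le_add_left h _)).comp (φ x))
    {x y : Pt n} (h : x ≤ y) (v : M.V x) :
    φ y (M.ρ h v) = N.ρ (add_le_add_left h (diag n (d:ℝ))) (φ x v) :=
  LinearMap.congr_fun (sqφ h) v

lemma interleaved_slice {M N : PersMod n k} {d : ℝ≥0} (h : M.Interleaved N d) (x : Pt n) :
    (M.slice x).Interleaved (N.slice x) d := by
  obtain ⟨φ, ψ, sqφ, sqψ, tr1, tr2⟩ := h
  refine ⟨fun t => (N.ρ (le_of_eq (diag_add x (t 0) (d:ℝ)))).comp (φ (x + diag n (t 0))),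
          fun t => (M.ρ (le_of_eq (diag_add x (t 0) (d:ℝ)))).comp (ψ (x + diag n (t 0))),
          ?_, ?_, ?_, ?_⟩
  · intro t t' h
    apply LinearMap.ext; intro v
    have h₁ : x + diag n (t 0) ≤ x + diag n (t' 0) := fun i => add_le_add_right (h 0) (x i)
    have hsl : x + diag n (t 0 + (d:ℝ)) ≤ x + diag n (t' 0 + (d:ℝ)) :=
      diag_le_diag x (add_le_add_left (h 0) _)
    show N.ρ (le_of_eq (diag_add x (t' 0) (d:ℝ))) (φ (x + diag n (t' 0)) (M.ρ h₁ v))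
        = N.ρ hsl (N.ρ (le_of_eq (diag_add x (t 0) (d:ℝ))) (φ (x + diag n (t 0)) v))
    rw [nat_apply sqφ h₁ v, rho_rho, rho_rho]
  · intro t t' h
    apply LinearMap.ext; intro v
    have h₁ : x + diag n (t 0) ≤ x + diag n (t' 0) := fun i => add_le_add_right (h 0) (x i)
    have hsl : x + diag n (t 0 + (d:ℝ)) ≤ x + diag n (t' 0 + (d:ℝ)) :=
      diag_le_diag x (add_le_add_left (h 0) _)
    show M.ρ (le_of_eq (diag_add x (t' 0) (d:ℝ))) (ψ (x + diag n (t' 0)) (N.ρ h₁ v))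
        = M.ρ hsl (M.ρ (le_of_eq (diag_add x (t 0) (d:ℝ))) (ψ (x + diag n (t 0)) v))
    rw [nat_apply sqψ h₁ v, rho_rho, rho_rho]
  · intro t
    apply LinearMap.ext; intro v
    have hd0 := d.coe_nonneg
    have hbig : x + diag n (t 0) ≤ x + diag n (t 0 + (d:ℝ) + (d:ℝ)) :=
      diag_le_diag x (by linarith)
    show M.ρ hbig v
        = M.ρ (le_of_eq (diag_add x (t 0 + (d:ℝ)) (d:ℝ)))
            (ψ (x + diag n (t 0 + (d:ℝ)))
              (N.ρ (le_of_eq (diag_add x (t 0) (d:ℝ))) (φ (x + diag n (t 0)) v)))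
    rw [nat_apply sqψ (le_of_eq (diag_add x (t 0) (d:ℝ))) (φ (x + diag n (t 0)) v)]
    have tria : ψ (x + diag n (t 0) + diag n (d:ℝ)) (φ (x + diag n (t 0)) v)
        = M.ρ ((le_add_diag (x + diag n (t 0)) hd0).trans (le_add_diag _ hd0)) v :=
      (LinearMap.congr_fun (tr1 (x + diag n (t 0))) v).symm
    erw [tria, rho_rho, rho_rho]
  · intro t
    apply LinearMap.ext; intro v
    have hd0 := d.coe_nonneg
    have hbig : x + diag n (t 0) ≤ x + diag n (t 0 + (d:ℝ) + (d:ℝ)) :=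
      diag_le_diag x (by linarith)
    show N.ρ hbig v
        = N.ρ (le_of_eq (diag_add x (t 0 + (d:ℝ)) (d:ℝ)))
            (φ (x + diag n (t 0 + (d:ℝ)))
              (M.ρ (le_of_eq (diag_add x (t 0) (d:ℝ))) (ψ (x + diag n (t 0)) v)))
    rw [nat_apply sqφ (le_of_eq (diag_add x (t 0) (d:ℝ))) (ψ (x + diag n (t 0)) v)]
    have tria : φ (x + diag n (t 0) + diag n (d:ℝ)) (ψ (x + diag n (t 0)) v)
        = N.ρ ((le_add_diag (x + diag n (t 0)) hd0).trans (le_add_diag _ hd0)) v :=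
      (LinearMap.congr_fun (tr2 (x + diag n (t 0))) v).symm
    erw [tria, rho_rho, rho_rho]

lemma dI_slice_le {M N : PersMod n k} (x : Pt n) :
    (M.slice x).dI (N.slice x) ≤ M.dI N :=
  le_iInf fun e => le_iInf fun h => iInf₂_le e (interleaved_slice h x)

lemma deltaStar_le_dI (M N : PersMod n k) : deltaStar M N ≤ M.dI N :=
  iSup_le fun x => dI_slice_le x

end Slice

section SliceFact

variable {n : ℕ} {k : Type*} [Field k]

/-- From δ* ≤ δ < δ' : if M spans a 2δ' diagonal segment at x, N contains its midpoint
(and symmetrically). -/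
lemma slice_fact {IM IN : Set (Pt n)} (hM : IsPInterval IM) (hN : IsPInterval IN)
    {δ δ' : ℝ≥0}
    (hstar : deltaStar (IntervalMod k IM hM) (IntervalMod k IN hN) ≤ (δ : ℝ≥0∞))
    (hlt : δ < δ') (x : Pt n) :
    (x ∈ IM → x + diag n (δ':ℝ) + diag n (δ':ℝ) ∈ IM → x + diag n (δ':ℝ) ∈ IN) ∧
    (x ∈ IN → x + diag n (δ':ℝ) + diag n (δ':ℝ) ∈ IN → x + diag n (δ':ℝ) ∈ IM) := by
  set M := IntervalMod k IM hM
  set N := IntervalMod k IN hN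
  have h1 : (M.slice x).dI (N.slice x) < (δ' : ℝ≥0∞) :=
    lt_of_le_of_lt (le_trans (le_iSup (fun y => (M.slice y).dI (N.slice y)) x) hstar)
      (ENNReal.coe_lt_coe.mpr hlt)
  obtain ⟨e, hIl, helt⟩ := dI_lt_elim h1
  have hec : (e:ℝ) < (δ':ℝ) := NNReal.coe_lt_coe.mpr (ENNReal.coe_lt_coe.mp helt)
  have he0 : (0:ℝ) ≤ (e:ℝ) := e.coe_nonneg
  obtain ⟨φs, ψs, _, _, tr1, tr2⟩ := hIl
  set d := (δ' : ℝ) with hd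
  set t : Pt 1 := (fun _ => d - (e:ℝ)) with ht
  constructor
  · intro hx h2
    have hsrc : x + diag n (t 0) ∈ IM := by
      refine hM.2.1 x hx _ h2 _ (le_add_diag x (by simp [ht]; linarith)) ?_
      rw [diag_add]
      exact diag_le_diag x (by simp [ht]; linarith)
    have htgt : x + diag n (t 0 + (e:ℝ) + (e:ℝ)) ∈ IM := by
      refine hM.2.1 x hx _ h2 _ (le_add_diag x (by simp [ht]; linarith)) ?_
      rw [diag_add]
      exact diag_le_diag x (by simp [ht]; linarith)
    have key := LinearMap.congr_fun (tr1 t) (onev k hsrc)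
    -- LHS is stepFun IM _ _ applied to onev
    have lhs_eq : (M.slice x).ρ
          ((le_add_diag t e.coe_nonneg).trans (le_add_diag _ e.coe_nonneg)) (onev k hsrc)
        = onev k htgt := stepFun_onev hsrc htgt
    rw [lhs_eq] at key
    have hne : φs t (onev k hsrc) ≠ 0 := by
      intro h0
      erw [LinearMap.comp_apply, h0, map_zero] at key
      exact onev_ne_zero htgt key
    have hmem : x + diag n (t 0 + (e:ℝ)) ∈ IN :=
      mem_of_ne_zero (I := IN) (v := φs t (onev k hsrc)) hne
    have : t 0 + (e:ℝ) = d := by simp [ht]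
    rwa [this] at hmem
  · intro hx h2
    have hsrc : x + diag n (t 0) ∈ IN := by
      refine hN.2.1 x hx _ h2 _ (le_add_diag x (by simp [ht]; linarith)) ?_
      rw [diag_add]
      exact diag_le_diag x (by simp [ht]; linarith)
    have htgt : x + diag n (t 0 + (e:ℝ) + (e:ℝ)) ∈ IN := by
      refine hN.2.1 x hx _ h2 _ (le_add_diag x (by simp [ht]; linarith)) ?_
      rw [diag_add]
      exact diag_le_diag x (by simp [ht]; linarith)
    have key := LinearMap.congr_fun (tr2 t) (onev k hsrc)
    have lhs_eq : (N.slice x).ρ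
          ((le_add_diag t e.coe_nonneg).trans (le_add_diag _ e.coe_nonneg)) (onev k hsrc)
        = onev k htgt := stepFun_onev hsrc htgt
    rw [lhs_eq] at key
    have hne : ψs t (onev k hsrc) ≠ 0 := by
      intro h0
      erw [LinearMap.comp_apply, h0, map_zero] at key
      exact onev_ne_zero htgt key
    have hmem : x + diag n (t 0 + (e:ℝ)) ∈ IM :=
      mem_of_ne_zero (I := IM) (v := ψs t (onev k hsrc)) hne
    have : t 0 + (e:ℝ) = d := by simp [ht]
    rwa [this] at hmem

end SliceFact

section Suff

variable {n : ℕ} {k : Type*} [Field k]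

/-- Pointwise condition for the interleaving map: membership in the intersection and
validity of the component. -/
def Cnd (I J : Set (Pt n)) (d : ℝ) (x : Pt n) : Prop :=
  x ∈ I ∩ shiftSet J d ∧ MNValid I (shiftSet J d) {q | Zigzag (I ∩ shiftSet J d) x q}

/-- The interleaving map: identity on valid components, zero elsewhere. -/
def Phi (k : Type*) [Field k] (I J : Set (Pt n)) (d : ℝ) (x : Pt n) :
    ↥(subOf k I x) →ₗ[k] ↥(subOf k J (x + diag n d)) where
  toFun v := ⟨if Cnd I J d x then (v : k) else 0, by
    by_cases h : Cnd I J d x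
    · rw [if_pos h]
      have : x + diag n d ∈ J := h.1.2
      simp [subOf, this]
    · rw [if_neg h]; exact zero_mem _⟩
  map_add' a b := by apply Subtype.ext; by_cases h : Cnd I J d x <;> simp [h]
  map_smul' c a := by apply Subtype.ext; by_cases h : Cnd I J d x <;> simp [h]

@[simp] lemma Phi_val {I J : Set (Pt n)} {d : ℝ} {x : Pt n} (v : ↥(subOf k I x)) :
    ((Phi k I J d x v : ↥(subOf k J (x + diag n d))) : k) = if Cnd I J d x then (v : k) else 0 :=
  rfl

lemma cnd_iff {I J : Set (Pt n)} {d : ℝ} {x y : Pt n} (hxI : x ∈ I) (hxy : x ≤ y) :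
    (Cnd I J d y ∧ y ∈ I) ↔ (Cnd I J d x ∧ y + diag n d ∈ J) := by
  constructor
  · rintro ⟨⟨hyA, hyV⟩, hyI⟩
    have hxJ : x ∈ shiftSet J d := (hyV y Relation.ReflTransGen.refl).1 x hxy hxI
    have hxA : x ∈ I ∩ shiftSet J d := ⟨hxI, hxJ⟩
    have hz : Zigzag (I ∩ shiftSet J d) x y := zigzag_single hxA hyA (Or.inl hxy)
    exact ⟨⟨hxA, by rw [zigzag_comp_eq hz]; exact hyV⟩, hyA.2⟩
  · rintro ⟨⟨hxA, hxV⟩, hyJ⟩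
    have hyI : y ∈ I := (hxV x Relation.ReflTransGen.refl).2 y hxy hyJ
    have hyA : y ∈ I ∩ shiftSet J d := ⟨hyI, hyJ⟩
    have hz : Zigzag (I ∩ shiftSet J d) x y := zigzag_single hxA hyA (Or.inl hxy)
    exact ⟨⟨hyA, by rw [← zigzag_comp_eq hz]; exact hxV⟩, hyI⟩

lemma phi_square {I J : Set (Pt n)} {d : ℝ} {x y : Pt n} (h : x ≤ y) :
    (Phi k I J d y).comp (stepFun I x y)
      = (stepFun J (x + diag n d) (y + diag n d)).comp (Phi k I J d x) := by
  apply LinearMap.ext; intro v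
  apply Subtype.ext
  simp only [LinearMap.comp_apply, Phi_val, stepFun_val]
  by_cases hxI : x ∈ I
  · by_cases h1 : y + diag n d ∈ J
    · by_cases h2 : Cnd I J d x
      · obtain ⟨c1, c2⟩ := (cnd_iff hxI h).mpr ⟨h2, h1⟩
        rw [if_pos h1, if_pos h2, if_pos c1, if_pos c2]
      · rw [if_pos h1, if_neg h2]
        by_cases h3 : Cnd I J d y
        · by_cases h4 : y ∈ I
          · exact absurd ((cnd_iff hxI h).mp ⟨h3, h4⟩).1 h2
          · rw [if_pos h3, if_neg h4]
        · rw [if_neg h3]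
    · rw [if_neg h1]
      by_cases h3 : Cnd I J d y
      · by_cases h4 : y ∈ I
        · exact absurd ((cnd_iff hxI h).mp ⟨h3, h4⟩).2 h1
        · rw [if_pos h3, if_neg h4]
      · rw [if_neg h3]
  · have hv := val_zero_of_not_mem hxI v
    rw [hv]
    split_ifs <;> simp

lemma coe_two_mul (e : ℝ≥0) : (e : ℝ≥0∞) * 2 = ENNReal.ofReal ((e:ℝ) * 2) := by
  rw [ENNReal.ofReal_mul e.coe_nonneg, ENNReal.ofReal_coe_nnreal, ENNReal.ofReal_ofNat]

lemma upper_clash {I : Set (Pt n)} {x : Pt n} {a b : ℝ} (hz : x + diag n a ∈ upperBd I)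
    (hw : x + diag n b ∈ I) (hab : a < b) : False :=
  hz.2 (x + diag n b) (fun i => by simp only [Pi.add_apply, diag]; linarith) hw

lemma lower_clash {I : Set (Pt n)} {x : Pt n} {a b : ℝ} (hz : x + diag n a ∈ lowerBd I)
    (hw : x + diag n b ∈ I) (hab : b < a) : False :=
  hz.2 (x + diag n b) (fun i => by simp only [Pi.add_apply, diag]; linarith) hw

lemma triv_bounds {I J' Q : Set (Pt n)} {e : ℝ≥0} (h : Trivializable I J' Q (e : ℝ≥0∞))
    (he : 0 < (e:ℝ)) {x : Pt n} (hx : x ∈ Q) :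
    (∃ α, x + diag n α ∈ upperBd I ∧ |α| < (e:ℝ) * 2) ∧
    (∃ α, x + diag n α ∈ lowerBd J' ∧ |α| < (e:ℝ) * 2) := by
  have h3 := h x hx
  constructor
  · have hu : dl x (upperBd I) < (e : ℝ≥0∞) * 2 :=
      (ENNReal.div_lt_iff (Or.inl two_ne_zero) (Or.inl ENNReal.ofNat_ne_top)).mp
        (lt_of_le_of_lt (le_max_left _ _) h3)
    rw [coe_two_mul] at hu
    obtain ⟨α, hmem, hlt⟩ := dl_lt_elim hu
    exact ⟨α, hmem, (ENNReal.ofReal_lt_ofReal_iff (by linarith)).mp hlt⟩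
  · have hu : dl x (lowerBd J') < (e : ℝ≥0∞) * 2 :=
      (ENNReal.div_lt_iff (Or.inl two_ne_zero) (Or.inl ENNReal.ofNat_ne_top)).mp
        (lt_of_le_of_lt (le_max_right _ _) h3)
    rw [coe_two_mul] at hu
    obtain ⟨α, hmem, hlt⟩ := dl_lt_elim hu
    exact ⟨α, hmem, (ENNReal.ofReal_lt_ofReal_iff (by linarith)).mp hlt⟩

lemma cnd_tri {I J : Set (Pt n)} {δ' : ℝ≥0} (hd : 0 < (δ':ℝ))
    (hsl : ∀ z : Pt n, z ∈ I → z + diag n (δ':ℝ) + diag n (δ':ℝ) ∈ I →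
      z + diag n (δ':ℝ) ∈ J)
    (hcI : ∀ Q, IsComponent (I ∩ shiftSet J (δ':ℝ)) Q →
        MNValid I (shiftSet J (δ':ℝ)) Q ∨ Trivializable I (shiftSet J (δ':ℝ)) Q (δ':ℝ≥0∞))
    (hcJ : ∀ Q, IsComponent (J ∩ shiftSet I (δ':ℝ)) Q →
        MNValid J (shiftSet I (δ':ℝ)) Q ∨ Trivializable J (shiftSet I (δ':ℝ)) Q (δ':ℝ≥0∞))
    {x : Pt n} (hx : x ∈ I) :
    (x + diag n (δ':ℝ) + diag n (δ':ℝ) ∈ I) ↔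
      (Cnd I J (δ':ℝ) x ∧ Cnd J I (δ':ℝ) (x + diag n (δ':ℝ))) := by
  set d := (δ':ℝ) with hdd
  constructor
  · intro h2
    have hxdJ : x + diag n d ∈ J := hsl x hx h2
    have hxA : x ∈ I ∩ shiftSet J d := ⟨hx, hxdJ⟩
    have c1 : Cnd I J d x := by
      refine ⟨hxA, ?_⟩
      rcases hcI _ ⟨x, hxA, rfl⟩ with hval | htriv
      · exact hval
      · exfalso
        obtain ⟨⟨α, hmem, hlt⟩, -⟩ := triv_bounds htriv hd Relation.ReflTransGen.refl
        have h2' : x + diag n (d + d) ∈ I := by rw [← diag_add]; exact h2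
        exact upper_clash hmem h2' (by rw [abs_lt] at hlt; linarith)
    have hx2A : x + diag n d ∈ J ∩ shiftSet I d := ⟨hxdJ, h2⟩
    have c2 : Cnd J I d (x + diag n d) := by
      refine ⟨hx2A, ?_⟩
      rcases hcJ _ ⟨_, hx2A, rfl⟩ with hval | htriv
      · exact hval
      · exfalso
        obtain ⟨-, ⟨α, hmem, hlt⟩⟩ := triv_bounds htriv hd Relation.ReflTransGen.refl
        have hmem' : x + diag n (d + α) ∈ lowerBd (shiftSet I d) := by
          rw [← diag_add]; exact hmem
        have hw : x + diag n (-d) ∈ shiftSet I d := by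
          show x + diag n (-d) + diag n d ∈ I
          rw [diag_add, neg_add_cancel, diag_zero]
          exact hx
        exact lower_clash hmem' hw (by rw [abs_lt] at hlt; linarith)
    exact ⟨c1, c2⟩
  · rintro ⟨-, ⟨hA, -⟩⟩
    exact hA.2

lemma phi_triangle {I J : Set (Pt n)} {δ' : ℝ≥0} (hd : 0 < (δ':ℝ))
    (hsl : ∀ z : Pt n, z ∈ I → z + diag n (δ':ℝ) + diag n (δ':ℝ) ∈ I →
      z + diag n (δ':ℝ) ∈ J)
    (hcI : ∀ Q, IsComponent (I ∩ shiftSet J (δ':ℝ)) Q →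
        MNValid I (shiftSet J (δ':ℝ)) Q ∨ Trivializable I (shiftSet J (δ':ℝ)) Q (δ':ℝ≥0∞))
    (hcJ : ∀ Q, IsComponent (J ∩ shiftSet I (δ':ℝ)) Q →
        MNValid J (shiftSet I (δ':ℝ)) Q ∨ Trivializable J (shiftSet I (δ':ℝ)) Q (δ':ℝ≥0∞))
    (x : Pt n) :
    stepFun I x (x + diag n (δ':ℝ) + diag n (δ':ℝ))
      = (Phi k J I (δ':ℝ) (x + diag n (δ':ℝ))).comp (Phi k I J (δ':ℝ) x) := by
  apply LinearMap.ext; intro v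
  apply Subtype.ext
  simp only [LinearMap.comp_apply, Phi_val, stepFun_val]
  by_cases hxI : x ∈ I
  · have hiff := cnd_tri hd hsl hcI hcJ hxI
    by_cases h1 : x + diag n (δ':ℝ) + diag n (δ':ℝ) ∈ I
    · obtain ⟨c1, c2⟩ := hiff.mp h1
      rw [if_pos h1, if_pos c2, if_pos c1]
    · rw [if_neg h1]
      by_cases h2 : Cnd J I (δ':ℝ) (x + diag n (δ':ℝ))
      · by_cases h3 : Cnd I J (δ':ℝ) x
        · exact absurd (hiff.mpr ⟨h3, h2⟩) h1
        · rw [if_pos h2, if_neg h3]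
      · rw [if_neg h2]
  · have hv := val_zero_of_not_mem hxI v
    rw [hv]
    split_ifs <;> simp

end Suff

section Necc

variable {n : ℕ} {k : Type*} [Field k]

/-- Value extraction helper. -/
def valOf {I : Set (Pt n)} {x : Pt n} {k : Type*} [Field k] (v : ↥(subOf k I x)) : k := v.val

lemma valOf_ne_zero {I : Set (Pt n)} {x : Pt n} {v : ↥(subOf k I x)} (h : valOf v ≠ 0) :
    v ≠ 0 := fun h0 => h (by rw [h0]; rfl)

lemma necc_side {IM IN : Set (Pt n)} (hM : IsPInterval IM) (hN : IsPInterval IN)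
    {δ' e : ℝ≥0} (hlt : e < δ')
    (h : (IntervalMod k IM hM).Interleaved (IntervalMod k IN hN) e) :
    ∀ Q : Set (Pt n), IsComponent (IM ∩ shiftSet IN (δ':ℝ)) Q →
      MNValid IM (shiftSet IN (δ':ℝ)) Q ∨
        Trivializable IM (shiftSet IN (δ':ℝ)) Q (δ':ℝ≥0∞) := by
  obtain ⟨φ, ψ, sqφ, sqψ, tr1, tr2⟩ := h
  have hcE : (e:ℝ) < (δ':ℝ) := NNReal.coe_lt_coe.mpr hlt
  have hc0 : (0:ℝ) ≤ (e:ℝ) := e.coe_nonneg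
  let lam : Pt n → k := fun x =>
    if hx : x ∈ IM then valOf (φ x (onev k hx)) else 0
  have lam_val : ∀ {x : Pt n} (hx : x ∈ IM), lam x = valOf (φ x (onev k hx)) := by
    intro x hx; show dite _ _ _ = _; rw [dif_pos hx]
  have lam_step : ∀ {x y : Pt n}, x ∈ IM ∩ shiftSet IN (δ':ℝ) →
      y ∈ IM ∩ shiftSet IN (δ':ℝ) → x ≤ y → lam x = lam y := by
    intro x y hxA hyA hxy
    have hxI : x ∈ IM := hxA.1
    have hyI : y ∈ IM := hyA.1
    rw [lam_val hxI, lam_val hyI]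
    have step : φ y (stepFun IM x y (onev k hxI))
        = stepFun IN (x + diag n (e:ℝ)) (y + diag n (e:ℝ)) (φ x (onev k hxI)) :=
      LinearMap.congr_fun (sqφ hxy) (onev k hxI)
    rw [stepFun_onev hxI hyI] at step
    by_cases hz : valOf (φ x (onev k hxI)) = 0
    · have hz' : φ x (onev k hxI) = 0 := Subtype.ext hz
      erw [hz', map_zero] at step
      rw [hz, step]; rfl
    · have hxc : x + diag n (e:ℝ) ∈ IN := mem_of_ne_zero (valOf_ne_zero hz)
      have hyc : y + diag n (e:ℝ) ∈ IN :=
        hN.2.1 _ hxc _ hyA.2 _ (le_diag_of_le hxy _) (diag_le_diag y hcE.le)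
      have hval := congrArg Subtype.val step
      erw [stepFun_val, if_pos hyc] at hval
      exact hval.symm
  have lam_zig : ∀ {x y : Pt n}, Zigzag (IM ∩ shiftSet IN (δ':ℝ)) x y →
      x ∈ IM ∩ shiftSet IN (δ':ℝ) →
      (y ∈ IM ∩ shiftSet IN (δ':ℝ) ∧ lam x = lam y) := by
    intro x y hz hx
    induction hz with
    | refl => exact ⟨hx, rfl⟩
    | tail hz' hstep ih =>
      obtain ⟨hbA, hlb⟩ := ih
      rcases hstep with ⟨h1, h2, h3 | h3⟩
      · exact ⟨h2, hlb.trans (lam_step h1 h2 h3)⟩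
      · exact ⟨h2, hlb.trans (lam_step h2 h1 h3).symm⟩
  rintro Q ⟨p, hpA, rfl⟩
  by_cases hl : lam p = 0
  · right
    intro x hxQ
    obtain ⟨hxA, hlx⟩ := lam_zig hxQ hpA
    have hxI : x ∈ IM := hxA.1
    have hphix : φ x (onev k hxI) = 0 :=
      Subtype.ext ((lam_val hxI).symm.trans (hlx.symm.trans hl))
    -- upper bound
    have key1 : x + diag n ((e:ℝ) + (e:ℝ)) ∉ IM := by
      rw [← diag_add]
      intro hmem
      have tria : stepFun IM x (x + diag n (e:ℝ) + diag n (e:ℝ)) (onev k hxI)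
          = ψ (x + diag n (e:ℝ)) (φ x (onev k hxI)) :=
        LinearMap.congr_fun (tr1 x) (onev k hxI)
      rw [hphix, map_zero, stepFun_onev hxI hmem] at tria
      exact onev_ne_zero hmem tria
    obtain ⟨α, hα0, hαc, hαmem⟩ := exists_upper_bd hM.2.1 hxI (by linarith) key1
    have hu : dl x (upperBd IM) ≤ ENNReal.ofReal ((e:ℝ) + (e:ℝ)) :=
      le_trans (dl_le_of_mem hαmem)
        (ENNReal.ofReal_le_ofReal (by rw [abs_of_nonneg hα0]; linarith))
    -- lower bound
    have key2 : x + diag n (-((e:ℝ) + (e:ℝ))) ∉ shiftSet IN (δ':ℝ) := by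
      intro hmem
      have hq : x + diag n (-((e:ℝ) + (e:ℝ)) + (δ':ℝ)) ∈ IN := by
        rw [← diag_add]; exact hmem
      have hq2 : x + diag n (-((e:ℝ) + (e:ℝ)) + (δ':ℝ)) + diag n (e:ℝ) + diag n (e:ℝ) ∈ IN := by
        rw [diag_add, diag_add,
          show -((e:ℝ) + (e:ℝ)) + (δ':ℝ) + ((e:ℝ) + (e:ℝ)) = (δ':ℝ) by ring]
        exact hxA.2
      have tria2 : stepFun IN (x + diag n (-((e:ℝ) + (e:ℝ)) + (δ':ℝ)))
            (x + diag n (-((e:ℝ) + (e:ℝ)) + (δ':ℝ)) + diag n (e:ℝ) + diag n (e:ℝ)) (onev k hq)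
          = φ (x + diag n (-((e:ℝ) + (e:ℝ)) + (δ':ℝ)) + diag n (e:ℝ))
              (ψ (x + diag n (-((e:ℝ) + (e:ℝ)) + (δ':ℝ))) (onev k hq)) :=
        LinearMap.congr_fun (tr2 _) (onev k hq)
      rw [stepFun_onev hq hq2] at tria2
      have hwne : ψ (x + diag n (-((e:ℝ) + (e:ℝ)) + (δ':ℝ))) (onev k hq) ≠ 0 := by
        intro h0
        rw [h0, map_zero] at tria2
        exact onev_ne_zero hq2 tria2
      have hpI : x + diag n (-((e:ℝ) + (e:ℝ)) + (δ':ℝ)) + diag n (e:ℝ) ∈ IM :=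
        mem_of_ne_zero hwne
      have hphip : φ (x + diag n (-((e:ℝ) + (e:ℝ)) + (δ':ℝ)) + diag n (e:ℝ)) (onev k hpI) ≠ 0 := by
        intro h0
        erw [eq_smul_onev hpI (ψ (x + diag n (-((e:ℝ) + (e:ℝ)) + (δ':ℝ))) (onev k hq)),
          map_smul, h0, smul_zero] at tria2
        exact onev_ne_zero hq2 tria2
      have hxp : x ≤ x + diag n (-((e:ℝ) + (e:ℝ)) + (δ':ℝ)) + diag n (e:ℝ) := by
        rw [diag_add]
        exact le_add_diag x (by linarith)
      have nat : φ (x + diag n (-((e:ℝ) + (e:ℝ)) + (δ':ℝ)) + diag n (e:ℝ))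
            (stepFun IM x (x + diag n (-((e:ℝ) + (e:ℝ)) + (δ':ℝ)) + diag n (e:ℝ)) (onev k hxI))
          = stepFun IN (x + diag n (e:ℝ))
              (x + diag n (-((e:ℝ) + (e:ℝ)) + (δ':ℝ)) + diag n (e:ℝ) + diag n (e:ℝ))
              (φ x (onev k hxI)) :=
        LinearMap.congr_fun (sqφ hxp) (onev k hxI)
      erw [stepFun_onev hxI hpI, hphix, map_zero] at nat
      exact hphip nat
    obtain ⟨β, hβ0, hβc, hβmem⟩ :=
      exists_lower_bd (shift_conv hN.2.1 (δ':ℝ)) hxA.2 (by linarith) key2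
    have hlo : dl x (lowerBd (shiftSet IN (δ':ℝ))) ≤ ENNReal.ofReal ((e:ℝ) + (e:ℝ)) :=
      le_trans (dl_le_of_mem hβmem)
        (ENNReal.ofReal_le_ofReal (by rw [abs_neg, abs_of_nonneg hβ0]; linarith))
    -- combine
    have hofE : ENNReal.ofReal ((e:ℝ) + (e:ℝ)) / 2 < (δ' : ℝ≥0∞) := by
      rw [show (e:ℝ) + (e:ℝ) = (e:ℝ) * 2 by ring, ← coe_two_mul e, mul_div_assoc,
        ENNReal.div_self two_ne_zero ENNReal.ofNat_ne_top, mul_one]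
      exact ENNReal.coe_lt_coe.mpr hlt
    show dtriv IM (shiftSet IN (δ':ℝ)) x < (δ' : ℝ≥0∞)
    unfold dtriv
    exact max_lt (lt_of_le_of_lt (ENNReal.div_le_div_right hu 2) hofE)
      (lt_of_le_of_lt (ENNReal.div_le_div_right hlo 2) hofE)
  · left
    intro x hxQ
    obtain ⟨hxA, hlx⟩ := lam_zig hxQ hpA
    have hxI : x ∈ IM := hxA.1
    have hlxne : valOf (φ x (onev k hxI)) ≠ 0 := by
      rw [← lam_val hxI, ← hlx]; exact hl
    have hxc : x + diag n (e:ℝ) ∈ IN := mem_of_ne_zero (valOf_ne_zero hlxne)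
    constructor
    · intro y hyx hyI
      have nat : φ x (stepFun IM y x (onev k hyI))
          = stepFun IN (y + diag n (e:ℝ)) (x + diag n (e:ℝ)) (φ y (onev k hyI)) :=
        LinearMap.congr_fun (sqφ hyx) (onev k hyI)
      rw [stepFun_onev hyI hxI] at nat
      have hval := congrArg Subtype.val nat
      erw [stepFun_val, if_pos hxc] at hval
      have hyne : valOf (φ y (onev k hyI)) ≠ 0 := by
        have h9 : valOf (φ x (onev k hxI)) = valOf (φ y (onev k hyI)) := hval
        rw [← h9]; exact hlxne
      have hyc : y + diag n (e:ℝ) ∈ IN := mem_of_ne_zero (valOf_ne_zero hyne)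
      show y + diag n (δ':ℝ) ∈ IN
      exact hN.2.1 _ hyc _ hxA.2 _ (diag_le_diag y hcE.le) (le_diag_of_le hyx _)
    · intro z hxz hzJ
      by_contra hzI
      have nat : φ z (stepFun IM x z (onev k hxI))
          = stepFun IN (x + diag n (e:ℝ)) (z + diag n (e:ℝ)) (φ x (onev k hxI)) :=
        LinearMap.congr_fun (sqφ hxz) (onev k hxI)
      erw [stepFun_zero_of_not_mem hzI, map_zero] at nat
      have hzc : z + diag n (e:ℝ) ∈ IN :=
        hN.2.1 _ hxc _ hzJ _ (le_diag_of_le hxz _) (diag_le_diag z hcE.le)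
      have hval := congrArg Subtype.val nat.symm
      erw [stepFun_val, if_pos hzc] at hval
      have h9 : valOf (φ x (onev k hxI)) = 0 := hval
      exact hlxne h9

end Necc

/-- criterion for d_I(M,N) ≤ δ for interval modules: δ ≥ δ* and,
for all δ' > δ, every intersection component of M and N_{→δ'} (and
symmetrically of M_{→δ'} and N) is valid or δ'-trivializable. -/
theorem stmt8 {n : ℕ} {k : Type*} [Field k] (IM IN : Set (Pt n))
    (hM : IsPInterval IM) (hN : IsPInterval IN) (δ : ℝ≥0) :
    (IntervalMod k IM hM).dI (IntervalMod k IN hN) ≤ (δ : ℝ≥0∞) ↔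
      (deltaStar (IntervalMod k IM hM) (IntervalMod k IN hN) ≤ (δ : ℝ≥0∞) ∧
       ∀ δ' : ℝ≥0, δ < δ' →
         (∀ Q : Set (Pt n), IsComponent (IM ∩ shiftSet IN (δ' : ℝ)) Q →
            MNValid IM (shiftSet IN (δ' : ℝ)) Q ∨
              Trivializable IM (shiftSet IN (δ' : ℝ)) Q (δ' : ℝ≥0∞)) ∧
         (∀ Q : Set (Pt n), IsComponent (IN ∩ shiftSet IM (δ' : ℝ)) Q →
            MNValid IN (shiftSet IM (δ' : ℝ)) Q ∨
              Trivializable IN (shiftSet IM (δ' : ℝ)) Q (δ' : ℝ≥0∞))) := by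
  constructor
  · intro hdi
    refine ⟨le_trans (deltaStar_le_dI _ _) hdi, ?_⟩
    intro δ' hlt'
    have hstrict : (IntervalMod k IM hM).dI (IntervalMod k IN hN) < (δ' : ℝ≥0∞) :=
      lt_of_le_of_lt hdi (ENNReal.coe_lt_coe.mpr hlt')
    obtain ⟨e, hInt, helt⟩ := dI_lt_elim hstrict
    have helt' : e < δ' := ENNReal.coe_lt_coe.mp helt
    exact ⟨necc_side hM hN helt' hInt, necc_side hN hM helt' (interleaved_symm hInt)⟩
  · rintro ⟨hstar, hcond⟩
    have hstep : ∀ δ' : ℝ≥0, δ < δ' →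
        (IntervalMod k IM hM).Interleaved (IntervalMod k IN hN) δ' := by
      intro δ' hlt'
      obtain ⟨hc1, hc2⟩ := hcond δ' hlt'
      have hd : 0 < (δ':ℝ) := lt_of_le_of_lt δ.coe_nonneg (NNReal.coe_lt_coe.mpr hlt')
      have hsl := slice_fact hM hN hstar hlt'
      refine ⟨fun x => Phi k IM IN (δ':ℝ) x, fun x => Phi k IN IM (δ':ℝ) x, ?_, ?_, ?_, ?_⟩
      · intro x y h; exact phi_square h
      · intro x y h; exact phi_square h
      · intro x; exact phi_triangle hd (fun z hz h2 => (hsl z).1 hz h2) hc1 hc2 x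
      · intro x; exact phi_triangle hd (fun z hz h2 => (hsl z).2 hz h2) hc2 hc1 x
    by_contra hgt
    push_neg at hgt
    obtain ⟨r, hr1, hr2⟩ := ENNReal.lt_iff_exists_nnreal_btwn.mp hgt
    have hle : (IntervalMod k IM hM).dI (IntervalMod k IN hN) ≤ (r : ℝ≥0∞) :=
      iInf₂_le r (hstep r (ENNReal.coe_lt_coe.mp hr1))
    exact absurd (lt_of_le_of_lt hle hr2) (lt_irrefl _)

end
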